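/- For every integer ℓ ≥ 4, the k-linear map Hom_A(P_{ℓ−1}, k_ε) → Hom_A(P_ℓ, k_ε), g ↦ g ∘ d_ℓ, has kernel of k-dimension 2n² and image of k-dimension 2n². -/

import Mathlib

/-!
Common setting (from the paper "The Anick resolution of the co-unit of the free unitary
quantum group", arXiv:2403.06663):

`k` is a field and `n ≥ 2`.  `S` is the set of `2n²` generators `u∘_{j,i}, u•_{j,i}`,
`(j,i) ∈ {1,…,n}²`, with the involution `*` exchanging `u∘_{j,i}` and `u•_{j,i}`.
Indices are realized `0`-based as elements of `Fin n` (so the index `1` is `fin1 = 0`,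
the index `n` is `finN = n-1`, and `σ(i) = n-i+1` is `Fin.rev`).
-/

namespace UnPlusAnick

/-- A generator: a color (`false` = white `∘`, `true` = black `•`) and a pair of indices. -/
abbrev Gen (n : ℕ) := Bool × Fin n × Fin n

/-- The involution `*` on the generators: it flips the color and keeps the indices. -/
def genStar {n : ℕ} (g : Gen n) : Gen n := (!g.1, g.2)

/-- An `n × n` matrix with entries in the set of generators. -/
abbrev Mat (n : ℕ) := Fin n → Fin n → Gen n

/-- The fundamental matrix `u`, `u_{j,i} = u∘_{j,i}`. -/
def uMat (n : ℕ) : Mat n := fun j i => (false, j, i)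

/-- The transpose `vᵀ`. -/
def mT {n : ℕ} (v : Mat n) : Mat n := fun j i => v i j

/-- The matrix `v^σ`, `(v^σ)_{j,i} = (v_{σ(j),σ(i)})^*`. -/
def mS {n : ℕ} (v : Mat n) : Mat n := fun j i => genStar (v j.rev i.rev)

/-- The matrix `v^δ`, `(v^δ)_{j,i} = (v_{σ(i),σ(j)})^*`; thus `v^δ = (v^σ)ᵀ`. -/
def mD {n : ℕ} (v : Mat n) : Mat n := fun j i => genStar (v i.rev j.rev)

/-- The set `V = {u, uᵀ, u^σ, u^δ}`. -/
def V (n : ℕ) : Set (Mat n) := {uMat n, mT (uMat n), mS (uMat n), mD (uMat n)}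

/-- The index `1` of `{1, …, n}`, as the `0`-based element `0` of `Fin n`. -/
def fin1 (n : ℕ) (hn : 2 ≤ n) : Fin n := ⟨0, by omega⟩

/-- The index `n` of `{1, …, n}`, as the `0`-based element `n - 1` of `Fin n`. -/
def finN (n : ℕ) (hn : 2 ≤ n) : Fin n := ⟨n - 1, by omega⟩

theorem genStar_genStar {n : ℕ} (g : Gen n) : genStar (genStar g) = g := by simp [genStar]

theorem mS_mS {n : ℕ} (v : Mat n) : mS (mS v) = v := by
  funext j i; simp [mS, genStar_genStar]

theorem mD_mD {n : ℕ} (v : Mat n) : mD (mD v) = v := by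
  funext j i; simp [mD, genStar_genStar]

theorem mS_mD {n : ℕ} (v : Mat n) : mS (mD v) = mT v := by
  funext j i; simp [mS, mD, mT, genStar_genStar]

theorem mD_mS {n : ℕ} (v : Mat n) : mD (mS v) = mT v := by
  funext j i; simp [mS, mD, mT, genStar_genStar]

/-- `V` is closed under transposition. -/
theorem V_mT {n : ℕ} {v : Mat n} (hv : v ∈ V n) : mT v ∈ V n := by
  simp only [V, Set.mem_insert_iff, Set.mem_singleton_iff] at hv ⊢
  rcases hv with rfl | rfl | rfl | rfl
  · exact Or.inr (Or.inl rfl)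
  · exact Or.inl rfl
  · exact Or.inr (Or.inr (Or.inr rfl))
  · exact Or.inr (Or.inr (Or.inl rfl))

/-- `V` is closed under `v ↦ v^σ`. -/
theorem V_mS {n : ℕ} {v : Mat n} (hv : v ∈ V n) : mS v ∈ V n := by
  simp only [V, Set.mem_insert_iff, Set.mem_singleton_iff] at hv ⊢
  rcases hv with rfl | rfl | rfl | rfl
  · exact Or.inr (Or.inr (Or.inl rfl))
  · exact Or.inr (Or.inr (Or.inr rfl))
  · exact Or.inl (mS_mS _)
  · exact Or.inr (Or.inl (mS_mD _))

/-- `V` is closed under `v ↦ v^δ`. -/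
theorem V_mD {n : ℕ} {v : Mat n} (hv : v ∈ V n) : mD v ∈ V n := by
  simp only [V, Set.mem_insert_iff, Set.mem_singleton_iff] at hv ⊢
  rcases hv with rfl | rfl | rfl | rfl
  · exact Or.inr (Or.inr (Or.inr rfl))
  · exact Or.inr (Or.inr (Or.inl rfl))
  · exact Or.inr (Or.inl (mD_mS _))
  · exact Or.inl (mD_mD _)

/-! ### Words and the free algebra -/

/-- Words in the generators: the free monoid over the set of generators. -/
abbrev Word (n : ℕ) := FreeMonoid (Gen n)

/-- The free unital associative `k`-algebra on the generators, realized as the monoid algebra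
of the free monoid of words; its canonical `k`-basis is the set of words. -/
abbrev FreeAlg (k : Type*) [Field k] (n : ℕ) := MonoidAlgebra k (Word n)

/-- A word, viewed as a monomial in the free algebra. -/
noncomputable def wd (k : Type*) [Field k] {n : ℕ} (w : Word n) : FreeAlg k n :=
  MonoidAlgebra.of k (Word n) w

/-- The relation `b^v_{j,i} = ∑_{s=1}^{n} v_{j,σ(s)} (v^δ)_{s,σ(i)} − δ_{j,i} · 1`. -/
noncomputable def brel (k : Type*) [Field k] {n : ℕ} (v : Mat n) (j i : Fin n) : FreeAlg k n :=
  (∑ s : Fin n, wd k (FreeMonoid.of (v j s.rev) * FreeMonoid.of (mD v s i.rev)))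
    - if j = i then 1 else 0

/-- The set of relations `R = {b^v_{j,i} : v ∈ V, (j,i) ∈ {1,…,n}²}`. -/
def rels (k : Type*) [Field k] (n : ℕ) : Set (FreeAlg k n) :=
  {x | ∃ v ∈ V n, ∃ j i : Fin n, x = brel k v j i}

/-- `b̃^v = v_{n,n}(v^δ)_{1,1} − ∑_{s=2}^{n} ∑_{t=1}^{n−1} v_{t,σ(s)}(v^δ)_{s,σ(t)} + (n−2)·1`. -/
noncomputable def btil (k : Type*) [Field k] (n : ℕ) (hn : 2 ≤ n) (v : Mat n) : FreeAlg k n :=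
  wd k (FreeMonoid.of (v (finN n hn) (finN n hn)) * FreeMonoid.of (mD v (fin1 n hn) (fin1 n hn)))
    - (∑ s ∈ Finset.univ.filter (fun s : Fin n => s ≠ fin1 n hn),
        ∑ t ∈ Finset.univ.filter (fun t : Fin n => t ≠ finN n hn),
          wd k (FreeMonoid.of (v t s.rev) * FreeMonoid.of (mD v s t.rev)))
    + ((n - 2 : ℕ) : FreeAlg k n)

/-! ### The monomial order and tips -/

/-- The strict order on the generators: every black generator is smaller than every white one;
`u•_{t,s} < u•_{j,i}` iff `(j,i) <` `(t,s)` lexicographically, and `u∘_{t,s} < u∘_{j,i}` iff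
`(t,s) < (j,i)` lexicographically. -/
def genLT {n : ℕ} (g h : Gen n) : Prop :=
  (g.1 = true ∧ h.1 = false) ∨
    (g.1 = true ∧ h.1 = true ∧ toLex h.2 < toLex g.2) ∨
    (g.1 = false ∧ h.1 = false ∧ toLex g.2 < toLex h.2)

/-- The degreewise lexicographic extension of the order on generators to words:
`w ≤ w'` iff `w = w'`, or `w` is shorter than `w'`, or they have the same length and `w`
precedes `w'` lexicographically letter by letter. -/
def wordLE {n : ℕ} (w w' : Word n) : Prop :=
  w = w' ∨ (FreeMonoid.toList w).length < (FreeMonoid.toList w').length ∨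
    ((FreeMonoid.toList w).length = (FreeMonoid.toList w').length ∧
      List.Lex genLT (FreeMonoid.toList w) (FreeMonoid.toList w'))

/-- `IsTip f t`: the word `t` is the `≤`-largest word occurring with nonzero coefficient in
`f`, i.e. `Tip(f) = t`. -/
def IsTip (k : Type*) [Field k] {n : ℕ} (f : FreeAlg k n) (t : Word n) : Prop :=
  f.coeff t ≠ 0 ∧ ∀ w : Word n, f.coeff w ≠ 0 → wordLE w t

/-- `w` divides `w'` (as words in the free monoid). -/
def WDvd {n : ℕ} (w w' : Word n) : Prop := ∃ w₁ w₂ : Word n, w' = w₁ * w * w₂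

/-! ### The ideal of relations -/

/-- The two-sided ideal `I` of the free algebra generated by the set of relations `R`. -/
noncomputable def idl (k : Type*) [Field k] (n : ℕ) : TwoSidedIdeal (FreeAlg k n) :=
  TwoSidedIdeal.span (rels k n)

/-- The set `Tip(I)` of tips of nonzero elements of `I`. -/
def TipSet (k : Type*) [Field k] (n : ℕ) : Set (Word n) :=
  {w | ∃ f : FreeAlg k n, f ∈ idl k n ∧ f ≠ 0 ∧ IsTip k f w}

/-! ### Reductions and ambiguities -/

/-- `φ` is a one-step reduction by `f`: there are fixed words `w₁`, `w₂` such that `φ` maps the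
word `w₁ Tip(f) w₂` to `w₁ (Tip(f) − c⁻¹ f) w₂`, where `c` is the leading coefficient of `f`,
and fixes every other word. -/
def IsOneStep (k : Type*) [Field k] {n : ℕ} (f : FreeAlg k n)
    (φ : FreeAlg k n →ₗ[k] FreeAlg k n) : Prop :=
  f ≠ 0 ∧ ∃ (w₁ w₂ t : Word n), IsTip k f t ∧
    φ (wd k (w₁ * t * w₂)) = wd k w₁ * (wd k t - (f.coeff t)⁻¹ • f) * wd k w₂ ∧
    ∀ w : Word n, w ≠ w₁ * t * w₂ → φ (wd k w) = wd k w

/-- A reduction by a set `G`: a finite composition of one-step reductions by nonzero elements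
of `G`. -/
inductive IsReduction (k : Type*) [Field k] {n : ℕ} (G : Set (FreeAlg k n)) :
    (FreeAlg k n →ₗ[k] FreeAlg k n) → Prop
  | id : IsReduction k G LinearMap.id
  | comp {φ ψ : FreeAlg k n →ₗ[k] FreeAlg k n} {g : FreeAlg k n} (hg : g ∈ G)
      (hφ : IsOneStep k g φ) (hψ : IsReduction k G ψ) : IsReduction k G (φ ∘ₗ ψ)

/-- `(g, g', w₁, w₂)` is an inclusion ambiguity of `G`. -/
def IsInclusionAmbiguity (k : Type*) [Field k] {n : ℕ} (G : Set (FreeAlg k n))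
    (g g' : FreeAlg k n) (w₁ w₂ : Word n) : Prop :=
  g ∈ G ∧ g' ∈ G ∧ g ≠ 0 ∧ g' ≠ 0 ∧ g ≠ g' ∧
    ∃ t t' : Word n, IsTip k g t ∧ IsTip k g' t' ∧ w₁ * t * w₂ = t'

/-- The inclusion ambiguity `(g, g', w₁, w₂)` of `G` resolves. -/
def InclusionAmbiguityResolves (k : Type*) [Field k] {n : ℕ} (G : Set (FreeAlg k n))
    (g g' : FreeAlg k n) (w₁ w₂ : Word n) : Prop :=
  ∀ t t' : Word n, IsTip k g t → IsTip k g' t' →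
    ∃ φ₁ φ₂ : FreeAlg k n →ₗ[k] FreeAlg k n, IsReduction k G φ₁ ∧ IsReduction k G φ₂ ∧
      φ₁ (wd k t' - (g'.coeff t')⁻¹ • g') = φ₂ (wd k w₁ * (wd k t - (g.coeff t)⁻¹ • g) * wd k w₂)

/-- `(g₁, g₂, w₁, w₂)` is an overlap ambiguity of `G`. -/
def IsOverlapAmbiguity (k : Type*) [Field k] {n : ℕ} (G : Set (FreeAlg k n))
    (g₁ g₂ : FreeAlg k n) (w₁ w₂ : Word n) : Prop :=
  g₁ ∈ G ∧ g₂ ∈ G ∧ g₁ ≠ 0 ∧ g₂ ≠ 0 ∧ ¬(w₁ = 1 ∧ w₂ = 1) ∧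
    ∃ t₁ t₂ : Word n, IsTip k g₁ t₁ ∧ IsTip k g₂ t₂ ∧ t₁ * w₂ = w₁ * t₂ ∧
      ¬WDvd t₂ w₂ ∧ ¬WDvd t₁ w₁

/-- The overlap ambiguity `(g₁, g₂, w₁, w₂)` of `G` resolves. -/
def OverlapAmbiguityResolves (k : Type*) [Field k] {n : ℕ} (G : Set (FreeAlg k n))
    (g₁ g₂ : FreeAlg k n) (w₁ w₂ : Word n) : Prop :=
  ∀ t₁ t₂ : Word n, IsTip k g₁ t₁ → IsTip k g₂ t₂ →
    ∃ φ₁ φ₂ : FreeAlg k n →ₗ[k] FreeAlg k n, IsReduction k G φ₁ ∧ IsReduction k G φ₂ ∧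
      φ₁ ((wd k t₁ - (g₁.coeff t₁)⁻¹ • g₁) * wd k w₂) = φ₂ (wd k w₁ * (wd k t₂ - (g₂.coeff t₂)⁻¹ • g₂))

/-! ### Gröbner bases -/

/-- `G` is a Gröbner basis of the two-sided ideal `J` with respect to the order: `G ⊆ J` and
the tip of every nonzero element of `J` is divisible by the tip of some nonzero element
of `G`. -/
def IsGroebner (k : Type*) [Field k] {n : ℕ} (G : Set (FreeAlg k n))
    (J : TwoSidedIdeal (FreeAlg k n)) : Prop :=
  (∀ g ∈ G, g ∈ J) ∧
    ∀ f : FreeAlg k n, f ∈ J → f ≠ 0 → ∀ t : Word n, IsTip k f t →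
      ∃ g ∈ G, g ≠ 0 ∧ ∃ tg : Word n, IsTip k g tg ∧ WDvd tg t

/-- A minimal Gröbner basis: `0 ∉ G` and the tip of no element of `G` divides the tip of a
different element of `G`. -/
def IsMinimalGroebner (k : Type*) [Field k] {n : ℕ} (G : Set (FreeAlg k n))
    (J : TwoSidedIdeal (FreeAlg k n)) : Prop :=
  IsGroebner k G J ∧ (0 : FreeAlg k n) ∉ G ∧
    ∀ g ∈ G, ∀ g' ∈ G, g ≠ g' → ∀ t t' : Word n, IsTip k g t → IsTip k g' t' → ¬WDvd t t'

/-- A reduced Gröbner basis: minimal, every element has leading coefficient `1`, and the tip of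
no element of `G` divides a word occurring with nonzero coefficient in a different element
of `G`. -/
def IsReducedGroebner (k : Type*) [Field k] {n : ℕ} (G : Set (FreeAlg k n))
    (J : TwoSidedIdeal (FreeAlg k n)) : Prop :=
  IsMinimalGroebner k G J ∧ (∀ g ∈ G, ∀ t : Word n, IsTip k g t → g.coeff t = 1) ∧
    ∀ g ∈ G, ∀ g' ∈ G, g ≠ g' → ∀ t : Word n, IsTip k g t →
      ∀ w : Word n, g'.coeff w ≠ 0 → ¬WDvd t w

/-! ### Monoidal ideals -/

/-- A monoidal ideal of the free monoid of words: a set of words containing all multiples of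
its elements. -/
def IsMonIdeal {n : ℕ} (M : Set (Word n)) : Prop :=
  ∀ w ∈ M, ∀ w₁ w₂ : Word n, w₁ * w * w₂ ∈ M

/-- `N` generates `M` as a monoidal ideal: `M` is the smallest monoidal ideal containing `N`. -/
def GeneratesMonIdeal {n : ℕ} (N M : Set (Word n)) : Prop :=
  IsMonIdeal M ∧ N ⊆ M ∧ ∀ M' : Set (Word n), IsMonIdeal M' → N ⊆ M' → M ⊆ M'

/-! ### Chain words -/

/-- `v^{[ℓ]}`: equal to `v` for odd `ℓ` and to `v^δ` for even `ℓ`. -/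
def pw {n : ℕ} (l : ℕ) (v : Mat n) : Mat n := if l % 2 = 1 then v else mD v

/-- The word `v^{(ℓ)}_{j,i}` (for `ℓ ≥ 1`). -/
def chainWord (n : ℕ) (hn : 2 ≤ n) (v : Mat n) (l : ℕ) (j i : Fin n) : Word n :=
  if l = 1 then FreeMonoid.of (v j i.rev)
  else if l % 2 = 0 then
    FreeMonoid.of (v j (finN n hn)) *
      (FreeMonoid.of (mD v (fin1 n hn) (finN n hn)) *
          FreeMonoid.of (v (fin1 n hn) (finN n hn))) ^ ((l - 2) / 2) *
      FreeMonoid.of (mD v (fin1 n hn) i.rev)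
  else
    FreeMonoid.of (v j (finN n hn)) *
      (FreeMonoid.of (mD v (fin1 n hn) (finN n hn)) *
          FreeMonoid.of (v (fin1 n hn) (finN n hn))) ^ ((l - 3) / 2) *
      FreeMonoid.of (mD v (fin1 n hn) (finN n hn)) * FreeMonoid.of (v (fin1 n hn) i.rev)

/-- The set `C_ℓ = {v^{(ℓ)}_{j,i} : v ∈ V, (j,i) ∈ {1,…,n}²}` of `ℓ`-chains. -/
def Cset (n : ℕ) (hn : 2 ≤ n) (l : ℕ) : Set (Word n) :=
  {w | ∃ v ∈ V n, ∃ j i : Fin n, w = chainWord n hn v l j i}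

/-! ### The quotient algebra `A = F/I`, the counit and the modules of the resolution -/

/-- The relation identifying each element of `R` with `0`; the induced ring congruence realizes
the quotient `A = F/I` by the two-sided ideal `I` generated by `R`. -/
def relR (k : Type*) [Field k] (n : ℕ) : FreeAlg k n → FreeAlg k n → Prop :=
  fun a b => a ∈ rels k n ∧ b = 0

/-- The `k`-algebra `A = F/I`. -/
abbrev Aq (k : Type*) [Field k] (n : ℕ) := RingQuot (relR k n)

/-- The quotient map `F → A = F/I`. -/
noncomputable def pr (k : Type*) [Field k] (n : ℕ) : FreeAlg k n →ₐ[k] Aq k n :=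
  RingQuot.mkAlgHom k (relR k n)

/-- The class `v_{j,i} + I ∈ A` of a generator. -/
noncomputable def gen (k : Type*) [Field k] {n : ℕ} (v : Mat n) (j i : Fin n) : Aq k n :=
  pr k n (wd k (FreeMonoid.of (v j i)))

/-- The ring homomorphism `Aᵐᵒᵖ →+* k` induced by `ε` (using the commutativity of `k`). -/
noncomputable def epsOp (k : Type*) [Field k] (n : ℕ) (ε : Aq k n →ₐ[k] k) :
    (Aq k n)ᵐᵒᵖ →+* k where
  toFun a := ε a.unop
  map_one' := by simp
  map_mul' a b := by simp [mul_comm]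
  map_zero' := by simp
  map_add' a b := by simp

/-- The right `A`-module `k_ε`: the field `k` with the right `A`-action induced by `ε`,
realized as a left module over the opposite algebra `Aᵐᵒᵖ`. -/
def KE (k : Type*) [Field k] (n : ℕ) (_ε : Aq k n →ₐ[k] k) : Type _ := k

instance (k : Type*) [Field k] (n : ℕ) (ε : Aq k n →ₐ[k] k) : AddCommGroup (KE k n ε) :=
  inferInstanceAs (AddCommGroup k)

instance (k : Type*) [Field k] (n : ℕ) (ε : Aq k n →ₐ[k] k) : Module k (KE k n ε) :=
  inferInstanceAs (Module k k)

instance (k : Type*) [Field k] (n : ℕ) (ε : Aq k n →ₐ[k] k) : One (KE k n ε) := ⟨(1 : k)⟩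

noncomputable instance (k : Type*) [Field k] (n : ℕ) (ε : Aq k n →ₐ[k] k) :
    Module ((Aq k n)ᵐᵒᵖ) (KE k n ε) :=
  Module.compHom k (epsOp k n ε)

instance (k : Type*) [Field k] (n : ℕ) (ε : Aq k n →ₐ[k] k) :
    SMulCommClass ((Aq k n)ᵐᵒᵖ) k (KE k n ε) :=
  ⟨fun a c x => by
    show epsOp k n ε a • (c • x) = c • (epsOp k n ε a • x)
    rw [smul_smul, smul_smul, mul_comm]⟩

/-- The free right `A`-module `P_ℓ = kC_ℓ ⊗ₖ A` with basis `C_ℓ` (for `ℓ ≥ 1`), realized as a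
left module over the opposite algebra `Aᵐᵒᵖ`. -/
abbrev Pmod (k : Type*) [Field k] (n : ℕ) (hn : 2 ≤ n) (l : ℕ) :=
  ↥(Cset n hn l) →₀ Aq k n

/-- The element `v^{(ℓ)}_{j,i} ⊗ a` of `P_ℓ`. -/
noncomputable def bas (k : Type*) [Field k] (n : ℕ) (hn : 2 ≤ n) (l : ℕ) (v : Mat n)
    (hv : v ∈ V n) (j i : Fin n) (a : Aq k n) : Pmod k n hn l :=
  Finsupp.single ⟨chainWord n hn v l j i, ⟨v, hv, j, i, rfl⟩⟩ a

/-- Pre-composition with a homomorphism of right `A`-modules, as the `k`-linear map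
`Hom_A(N, k_ε) → Hom_A(M, k_ε)`, `g ↦ g ∘ d`. -/
noncomputable def homMap (k : Type*) [Field k] {n : ℕ} (ε : Aq k n →ₐ[k] k) {M N : Type*}
    [AddCommMonoid M] [AddCommMonoid N] [Module ((Aq k n)ᵐᵒᵖ) M] [Module ((Aq k n)ᵐᵒᵖ) N]
    (d : M →ₗ[(Aq k n)ᵐᵒᵖ] N) :
    (N →ₗ[(Aq k n)ᵐᵒᵖ] KE k n ε) →ₗ[k] (M →ₗ[(Aq k n)ᵐᵒᵖ] KE k n ε) where
  toFun g := g.comp d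
  map_add' _ _ := LinearMap.ext fun _ => rfl
  map_smul' _ _ := LinearMap.ext fun _ => rfl

/-- The right-hand side of the defining formula for `d₂` on the basis element
`v^{(2)}_{j,i} ⊗ 1`. -/
noncomputable def d2RHS (k : Type*) [Field k] (n : ℕ) (hn : 2 ≤ n) (v : Mat n)
    (hv : v ∈ V n) (j i : Fin n) : Pmod k n hn 1 :=
  (∑ s : Fin n, bas k n hn 1 v hv j s (gen k (mD v) s i.rev))
    + bas k n hn 1 (mD v) (V_mD hv) j.rev i 1
    - (if j = finN n hn ∧ i = finN n hn then
        ∑ s ∈ Finset.univ.filter (fun s : Fin n => s ≠ fin1 n hn),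
          ((∑ t : Fin n, bas k n hn 1 v hv t s (gen k (mD v) s t.rev))
            + bas k n hn 1 (mD v) (V_mD hv) s s.rev 1)
      else 0)

/-- The right-hand side of the defining formula for `d_ℓ`, `ℓ ≥ 3`, on the basis element
`v^{(ℓ)}_{j,i} ⊗ 1`. -/
noncomputable def dTail (k : Type*) [Field k] (n : ℕ) (hn : 2 ≤ n) (l : ℕ) (v : Mat n)
    (hv : v ∈ V n) (j i : Fin n) : Pmod k n hn (l - 1) :=
  (∑ s : Fin n, bas k n hn (l - 1) v hv j s (gen k (pw l v) s i.rev))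
    + bas k n hn (l - 1) (mD v) (V_mD hv) j.rev i ((-1 : Aq k n) ^ l)
    + (if j = finN n hn then
        ((bas k n hn (l - 1) (mT v) (V_mT hv) (fin1 n hn) (fin1 n hn)
              (gen k (pw l (mT v)) i.rev (finN n hn))
            + (if l = 3 then
                ∑ s ∈ Finset.univ.filter (fun s : Fin n => s ≠ fin1 n hn ∧ s ≠ finN n hn),
                  bas k n hn (l - 1) (mT v) (V_mT hv) s s (gen k (pw l (mT v)) i.rev (finN n hn))
              else 0))
          - (if i = finN n hn then
              (∑ s : Fin n, bas k n hn (l - 1) (mT v) (V_mT hv) (fin1 n hn) s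
                  (gen k (pw l (mT v)) s (finN n hn)))
                + bas k n hn (l - 1) (mS v) (V_mS hv) (finN n hn) (fin1 n hn) ((-1 : Aq k n) ^ l)
            else 0))
      else 0)
    + (if j = fin1 n hn ∧ i = finN n hn then
        bas k n hn (l - 1) (mS v) (V_mS hv) (fin1 n hn) (fin1 n hn) ((-1 : Aq k n) ^ l)
          + (if l = 3 then
              ∑ s ∈ Finset.univ.filter (fun s : Fin n => s ≠ fin1 n hn ∧ s ≠ finN n hn),
                bas k n hn (l - 1) (mS v) (V_mS hv) s s ((-1 : Aq k n) ^ l)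
            else 0)
      else 0)

/-- The system of identities from STATEMENT 14, for a fixed `v ∈ V`. -/
noncomputable def cond14 (k : Type*) [Field k] {n : ℕ} (hn : 2 ≤ n) (ε : Aq k n →ₐ[k] k)
    (g : Pmod k n hn 1 →ₗ[(Aq k n)ᵐᵒᵖ] KE k n ε) (v : Mat n) (hv : v ∈ V n) : Prop :=
  ∀ j i : Fin n, g (bas k n hn 1 (mS v) (V_mS hv) j i 1) = -g (bas k n hn 1 v hv i j 1)

/-- The system of identities (1)–(4) from STATEMENT 16, for a fixed `v ∈ V`. -/
noncomputable def cond16 (k : Type*) [Field k] {n : ℕ} (hn : 2 ≤ n) (ε : Aq k n →ₐ[k] k)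
    (l : ℕ) (g : Pmod k n hn (l - 1) →ₗ[(Aq k n)ᵐᵒᵖ] KE k n ε) (v : Mat n)
    (hv : v ∈ V n) : Prop :=
  (∀ j i : Fin n, (j, i) ≠ (fin1 n hn, fin1 n hn) →
      g (bas k n hn (l - 1) (mT v) (V_mT hv) j i 1) =
        -(((-1 : k) ^ l) • g (bas k n hn (l - 1) (mS v) (V_mS hv) j.rev i.rev 1))
          - (if j = finN n hn ∧ i = finN n hn then
              g (bas k n hn (l - 1) v hv (fin1 n hn) (fin1 n hn) 1)
                + (if l = 3 then
                    ∑ s ∈ Finset.univ.filter (fun s : Fin n => s ≠ fin1 n hn ∧ s ≠ finN n hn),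
                      g (bas k n hn (l - 1) v hv s s 1)
                  else 0)
            else 0)) ∧
  (∀ j i : Fin n, (j, i) ≠ (fin1 n hn, fin1 n hn) →
      g (bas k n hn (l - 1) (mD v) (V_mD hv) j i 1) =
        -(((-1 : k) ^ l) • g (bas k n hn (l - 1) v hv j.rev i.rev 1))
          - (if j = finN n hn ∧ i = finN n hn then
              g (bas k n hn (l - 1) (mS v) (V_mS hv) (fin1 n hn) (fin1 n hn) 1)
                + (if l = 3 then
                    ∑ s ∈ Finset.univ.filter (fun s : Fin n => s ≠ fin1 n hn ∧ s ≠ finN n hn),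
                      g (bas k n hn (l - 1) (mS v) (V_mS hv) s s 1)
                  else 0)
            else 0)) ∧
  (g (bas k n hn (l - 1) (mD v) (V_mD hv) (fin1 n hn) (fin1 n hn) 1) =
      -(((-1 : k) ^ l) • g (bas k n hn (l - 1) (mT v) (V_mT hv) (fin1 n hn) (fin1 n hn) 1))
        - ((-1 : k) ^ l) • g (bas k n hn (l - 1) v hv (finN n hn) (finN n hn) 1)
        + (if l = 3 then
            ∑ s ∈ Finset.univ.filter (fun s : Fin n => s ≠ fin1 n hn ∧ s ≠ finN n hn),
              g (bas k n hn (l - 1) (mS v) (V_mS hv) s s 1)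
          else 0)) ∧
  (g (bas k n hn (l - 1) (mS v) (V_mS hv) (finN n hn) (finN n hn) 1) =
      -(if l = 3 then
          ∑ s ∈ Finset.univ.filter (fun s : Fin n => s ≠ fin1 n hn ∧ s ≠ finN n hn),
            g (bas k n hn (l - 1) (mS v) (V_mS hv) s s 1)
        else 0)
        + ((-1 : k) ^ l) • (g (bas k n hn (l - 1) v hv (finN n hn) (finN n hn) 1)
            + (if l = 3 then
                ∑ s ∈ Finset.univ.filter (fun s : Fin n => s ≠ fin1 n hn ∧ s ≠ finN n hn),
                  g (bas k n hn (l - 1) v hv s s 1)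
              else 0)))


/-! ### Auxiliary material for STATEMENT 18 -/

section Aux18

variable {n : ℕ}

theorem mT_mT (v : Mat n) : mT (mT v) = v := rfl
theorem mT_mS (v : Mat n) : mT (mS v) = mD v := rfl
theorem mT_mD (v : Mat n) : mT (mD v) = mS v := rfl
theorem mD_mT (v : Mat n) : mD (mT v) = mS v := rfl
theorem mS_mT (v : Mat n) : mS (mT v) = mD v := rfl

/-- Enumeration of the four matrices in `V`. -/
def vOf (n : ℕ) (m : Fin 4) : Mat n :=
  if m = 0 then uMat n else if m = 1 then mT (uMat n)
  else if m = 2 then mS (uMat n) else mD (uMat n)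

theorem vOf_zero : vOf n 0 = uMat n := rfl
theorem vOf_one : vOf n 1 = mT (uMat n) := rfl
theorem vOf_two : vOf n 2 = mS (uMat n) := rfl
theorem vOf_three : vOf n 3 = mD (uMat n) := rfl

def dIx (m : Fin 4) : Fin 4 := if m = 0 then 3 else if m = 1 then 2 else if m = 2 then 1 else 0
def tIx (m : Fin 4) : Fin 4 := if m = 0 then 1 else if m = 1 then 0 else if m = 2 then 3 else 2
def sIx (m : Fin 4) : Fin 4 := if m = 0 then 2 else if m = 1 then 3 else if m = 2 then 0 else 1

theorem mD_vOf (m : Fin 4) : mD (vOf n m) = vOf n (dIx m) := by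
  fin_cases m <;> simp [vOf, dIx, mD_mD, mD_mT, mD_mS]

theorem mT_vOf (m : Fin 4) : mT (vOf n m) = vOf n (tIx m) := by
  fin_cases m <;> simp [vOf, tIx, mT_mT, mT_mS, mT_mD]

theorem mS_vOf (m : Fin 4) : mS (vOf n m) = vOf n (sIx m) := by
  fin_cases m <;> simp [vOf, sIx, mS_mS, mS_mT, mS_mD]

theorem hvOf (m : Fin 4) : vOf n m ∈ V n := by
  fin_cases m <;> simp [vOf, V]

theorem vOf_mem_cases {v : Mat n} (hv : v ∈ V n) : ∃ m : Fin 4, v = vOf n m := by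
  simp only [V, Set.mem_insert_iff, Set.mem_singleton_iff] at hv
  rcases hv with rfl | rfl | rfl | rfl
  exacts [⟨0, rfl⟩, ⟨1, rfl⟩, ⟨2, rfl⟩, ⟨3, rfl⟩]

variable (hn : 2 ≤ n)

theorem rev_fin1 : (fin1 n hn).rev = finN n hn := by
  simp [fin1, finN, Fin.rev, Fin.ext_iff]

theorem rev_finN : (finN n hn).rev = fin1 n hn := by
  simp [fin1, finN, Fin.rev, Fin.ext_iff]; omega

theorem finN_ne_fin1 : finN n hn ≠ fin1 n hn := by
  simp [fin1, finN, Fin.ext_iff]; omega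

theorem rev_eq_finN_iff (i : Fin n) : i.rev = finN n hn ↔ i = fin1 n hn := by
  rw [← rev_fin1 hn, Fin.rev_inj]

theorem rev_eq_fin1_iff (i : Fin n) : i.rev = fin1 n hn ↔ i = finN n hn := by
  rw [← rev_finN hn, Fin.rev_inj]

end Aux18


section Chain

variable {n : ℕ} (hn : 2 ≤ n)

theorem chain_decomp_even (v : Mat n) {l : ℕ} (h2 : l % 2 = 0) (hl : 3 ≤ l) (j i : Fin n) :
    ∃ mid : List (Gen n),
      FreeMonoid.toList (chainWord n hn v l j i) =
        v j (finN n hn) :: mD v (fin1 n hn) (finN n hn) ::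
          (mid ++ [mD v (fin1 n hn) i.rev]) := by
  have hl1 : l ≠ 1 := by omega
  have hq : (l - 2) / 2 = (l - 2) / 2 - 1 + 1 := by omega
  refine ⟨v (fin1 n hn) (finN n hn) ::
    FreeMonoid.toList ((FreeMonoid.of (mD v (fin1 n hn) (finN n hn)) *
      FreeMonoid.of (v (fin1 n hn) (finN n hn))) ^ ((l - 2) / 2 - 1)), ?_⟩
  rw [chainWord, if_neg hl1, if_pos h2, hq, pow_succ']
  simp [FreeMonoid.toList_mul, FreeMonoid.toList_of]

theorem chain_decomp_odd (v : Mat n) {l : ℕ} (h2 : l % 2 = 1) (hl : 3 ≤ l) (j i : Fin n) :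
    ∃ mid : List (Gen n),
      FreeMonoid.toList (chainWord n hn v l j i) =
        v j (finN n hn) :: mD v (fin1 n hn) (finN n hn) ::
          (mid ++ [v (fin1 n hn) i.rev]) := by
  have hl1 : l ≠ 1 := by omega
  have h2' : ¬ l % 2 = 0 := by omega
  rcases Nat.eq_zero_or_pos ((l - 3) / 2) with hq | hq
  · refine ⟨[], ?_⟩
    rw [chainWord, if_neg hl1, if_neg h2', hq, pow_zero]
    simp [FreeMonoid.toList_mul, FreeMonoid.toList_of]
  · have hq' : (l - 3) / 2 = (l - 3) / 2 - 1 + 1 := by omega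
    refine ⟨v (fin1 n hn) (finN n hn) ::
      (FreeMonoid.toList ((FreeMonoid.of (mD v (fin1 n hn) (finN n hn)) *
        FreeMonoid.of (v (fin1 n hn) (finN n hn))) ^ ((l - 3) / 2 - 1)) ++
        [mD v (fin1 n hn) (finN n hn)]), ?_⟩
    rw [chainWord, if_neg hl1, if_neg h2', hq', pow_succ']
    simp [FreeMonoid.toList_mul, FreeMonoid.toList_of]

theorem vOf_row_inj (m : Fin 4) {j j' a : Fin n} (h : vOf n m j a = vOf n m j' a) : j = j' := by
  fin_cases m <;>
    simp [vOf, mD, mT, mS, uMat, genStar, Prod.ext_iff, Fin.rev_inj] at h <;> tauto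

theorem vOf_col_inj (m : Fin 4) {a i i' : Fin n} (h : vOf n m a i = vOf n m a i') : i = i' := by
  fin_cases m <;>
    simp [vOf, mD, mT, mS, uMat, genStar, Prod.ext_iff, Fin.rev_inj] at h <;> tauto

theorem vOf_snd_inj {m m' : Fin 4}
    (h : mD (vOf n m) (fin1 n hn) (finN n hn) = mD (vOf n m') (fin1 n hn) (finN n hn)) :
    m = m' := by
  have hz := finN_ne_fin1 hn
  fin_cases m <;> fin_cases m' <;>
    simp_all [vOf, mD, mT, mS, uMat, genStar, Prod.ext_iff,
      rev_finN hn, rev_fin1 hn]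

theorem chainWord_inj {l : ℕ} (hl : 3 ≤ l) {m m' : Fin 4} {j i j' i' : Fin n}
    (h : chainWord n hn (vOf n m) l j i = chainWord n hn (vOf n m') l j' i') :
    m = m' ∧ j = j' ∧ i = i' := by
  have ht := congrArg FreeMonoid.toList h
  by_cases h2 : l % 2 = 0
  · obtain ⟨mid, hm⟩ := chain_decomp_even hn (vOf n m) h2 hl j i
    obtain ⟨mid', hm'⟩ := chain_decomp_even hn (vOf n m') h2 hl j' i'
    rw [hm, hm'] at ht
    simp only [List.cons.injEq] at ht
    obtain ⟨hA, hB, hrest⟩ := ht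
    have hmm : m = m' := vOf_snd_inj hn hB
    subst hmm
    have hD := congrArg List.getLast? hrest
    simp only [List.getLast?_concat, Option.some.injEq] at hD
    rw [mD_vOf] at hD
    exact ⟨rfl, vOf_row_inj m hA, Fin.rev_inj.mp (vOf_col_inj (dIx m) hD)⟩
  · have h2' : l % 2 = 1 := by omega
    obtain ⟨mid, hm⟩ := chain_decomp_odd hn (vOf n m) h2' hl j i
    obtain ⟨mid', hm'⟩ := chain_decomp_odd hn (vOf n m') h2' hl j' i'
    rw [hm, hm'] at ht
    simp only [List.cons.injEq] at ht
    obtain ⟨hA, hB, hrest⟩ := ht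
    have hmm : m = m' := vOf_snd_inj hn hB
    subst hmm
    have hD := congrArg List.getLast? hrest
    simp only [List.getLast?_concat, Option.some.injEq] at hD
    exact ⟨rfl, vOf_row_inj m hA, Fin.rev_inj.mp (vOf_col_inj m hD)⟩

end Chain


section Phi

variable (k : Type*) [Field k] (n : ℕ) (hn : 2 ≤ n) (ε : Aq k n →ₐ[k] k) (l' : ℕ)

/-- The basis elements of `P_{l'}` indexed by `Fin 4 × Fin n × Fin n`. -/
def embC (x : Fin 4 × Fin n × Fin n) : ↥(Cset n hn l') :=
  ⟨chainWord n hn (vOf n x.1) l' x.2.1 x.2.2, ⟨vOf n x.1, hvOf x.1, x.2.1, x.2.2, rfl⟩⟩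

theorem embC_inj (hl' : 3 ≤ l') : Function.Injective (embC n hn l') := by
  rintro ⟨m, j, i⟩ ⟨m', j', i'⟩ h
  rw [Subtype.ext_iff] at h
  obtain ⟨h1, h2, h3⟩ := chainWord_inj hn hl' h
  simp_all

theorem op_smul_KE (a : Aq k n) (x : KE k n ε) : (MulOpposite.op a) • x = ε a • x := rfl

/-- Evaluation of homomorphisms on the canonical basis elements. -/
noncomputable def Phi :
    (Pmod k n hn l' →ₗ[(Aq k n)ᵐᵒᵖ] KE k n ε) →ₗ[k] (Fin 4 × Fin n × Fin n → k) where
  toFun g := fun x => g (Finsupp.single (embC n hn l' x) 1)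
  map_add' g h := rfl
  map_smul' c g := rfl

theorem bas_eq_single (v : Mat n) (hv : v ∈ V n) (m : Fin 4) (hm : v = vOf n m)
    (j i : Fin n) (a : Aq k n) :
    bas k n hn l' v hv j i a = Finsupp.single (embC n hn l' (m, j, i)) a := by
  subst hm; rfl

theorem Phi_apply_bas (g : Pmod k n hn l' →ₗ[(Aq k n)ᵐᵒᵖ] KE k n ε)
    (v : Mat n) (hv : v ∈ V n) (m : Fin 4) (hm : v = vOf n m) (j i : Fin n) (a : Aq k n) :
    g (bas k n hn l' v hv j i a) = ε a • Phi k n hn ε l' g (m, j, i) := by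
  rw [bas_eq_single k n hn l' v hv m hm]
  have hsingle : Finsupp.single (embC n hn l' (m, j, i)) a =
      (MulOpposite.op a) • Finsupp.single (embC n hn l' (m, j, i)) (1 : Aq k n) := by
    rw [Finsupp.smul_single, op_smul_eq_mul, one_mul]
  rw [hsingle, map_smul]
  rfl

theorem Phi_injective (hl' : 3 ≤ l') : Function.Injective (Phi k n hn ε l') := by
  have key : ∀ g : Pmod k n hn l' →ₗ[(Aq k n)ᵐᵒᵖ] KE k n ε,
      Phi k n hn ε l' g = 0 → g = 0 := by
    intro g hg
    have hsingle : ∀ (c : ↥(Cset n hn l')) (a : Aq k n), g (Finsupp.single c a) = 0 := by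
      rintro ⟨w, hw⟩ a
      obtain ⟨v, hv, j, i, rfl⟩ := hw
      obtain ⟨m, rfl⟩ := vOf_mem_cases hv
      have : (⟨chainWord n hn (vOf n m) l' j i, ⟨vOf n m, hv, j, i, rfl⟩⟩ :
          ↥(Cset n hn l')) = embC n hn l' (m, j, i) := rfl
      rw [this, ← bas_eq_single k n hn l' (vOf n m) hv m rfl,
        Phi_apply_bas k n hn ε l' g (vOf n m) hv m rfl]
      rw [hg]
      simp
      rfl
    apply LinearMap.ext
    intro p
    rw [LinearMap.zero_apply]
    induction p using Finsupp.induction with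
    | zero => simp
    | single_add c a f hcf ha ih => rw [map_add, hsingle, ih, add_zero]
  intro g h hgh
  have : Phi k n hn ε l' (g - h) = 0 := by rw [map_sub, hgh, sub_self]
  have := key _ this
  rwa [sub_eq_zero] at this

/-- Explicit preimage for `Phi`. -/
noncomputable def GinvFun (F : Fin 4 × Fin n × Fin n → k) :
    Pmod k n hn l' →ₗ[(Aq k n)ᵐᵒᵖ] KE k n ε where
  toFun p := ∑ x : Fin 4 × Fin n × Fin n, F x * ε (p (embC n hn l' x))
  map_add' p q := by
    show (∑ x, F x * ε ((p + q) (embC n hn l' x))) =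
      (∑ x, F x * ε (p (embC n hn l' x))) + ∑ x, F x * ε (q (embC n hn l' x))
    rw [← Finset.sum_add_distrib]
    refine Finset.sum_congr rfl fun x _ => ?_
    rw [Finsupp.add_apply, map_add, mul_add]
  map_smul' a p := by
    show (∑ x, F x * ε ((a • p) (embC n hn l' x))) =
      ε a.unop * ∑ x, F x * ε (p (embC n hn l' x))
    rw [Finset.mul_sum]
    refine Finset.sum_congr rfl fun x _ => ?_
    rw [Finsupp.smul_apply, MulOpposite.smul_eq_mul_unop, map_mul]
    ring

theorem Phi_surjective (hl' : 3 ≤ l') : Function.Surjective (Phi k n hn ε l') := by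
  classical
  intro F
  refine ⟨GinvFun k n hn ε l' F, ?_⟩
  funext x
  show (∑ y : Fin 4 × Fin n × Fin n,
      F y * ε ((Finsupp.single (embC n hn l' x) (1 : Aq k n)) (embC n hn l' y))) = F x
  have : ∀ y : Fin 4 × Fin n × Fin n,
      F y * ε ((Finsupp.single (embC n hn l' x) (1 : Aq k n)) (embC n hn l' y)) =
        if y = x then F y else 0 := by
    intro y
    rw [Finsupp.single_apply]
    by_cases h : y = x
    · subst h; rw [if_pos rfl, if_pos rfl, map_one, mul_one]
    · rw [if_neg (fun h' => h (embC_inj n hn l' hl' h').symm), if_neg h, map_zero, mul_zero]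
  rw [Finset.sum_congr rfl fun y _ => this y, Finset.sum_ite_eq' Finset.univ x F,
    if_pos (Finset.mem_univ x)]

/-- The `k`-linear identification of `Hom_A(P_{l'}, k_ε)` with `k`-valued functions. -/
noncomputable def PhiEquiv (hl' : 3 ≤ l') :
    (Pmod k n hn l' →ₗ[(Aq k n)ᵐᵒᵖ] KE k n ε) ≃ₗ[k] (Fin 4 × Fin n × Fin n → k) :=
  LinearEquiv.ofBijective (Phi k n hn ε l')
    ⟨Phi_injective k n hn ε l' hl', Phi_surjective k n hn ε l' hl'⟩

theorem PhiEquiv_apply (hl' : 3 ≤ l') (g : Pmod k n hn l' →ₗ[(Aq k n)ᵐᵒᵖ] KE k n ε)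
    (x : Fin 4 × Fin n × Fin n) :
    PhiEquiv k n hn ε l' hl' g x = g (Finsupp.single (embC n hn l' x) 1) := rfl

end Phi


section TlinKlin

variable (k : Type*) [Field k] (n : ℕ) (hn : 2 ≤ n) (e : k)

theorem dIx_zero : dIx 0 = 3 := rfl
theorem dIx_one : dIx 1 = 2 := rfl
theorem dIx_two : dIx 2 = 1 := rfl
theorem dIx_three : dIx 3 = 0 := rfl
theorem tIx_zero : tIx 0 = 1 := rfl
theorem tIx_one : tIx 1 = 0 := rfl
theorem tIx_two : tIx 2 = 3 := rfl
theorem tIx_three : tIx 3 = 2 := rfl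
theorem sIx_zero : sIx 0 = 2 := rfl
theorem sIx_one : sIx 1 = 3 := rfl
theorem sIx_two : sIx 2 = 0 := rfl
theorem sIx_three : sIx 3 = 1 := rfl

theorem fin4_cases (m : Fin 4) : m = 0 ∨ m = 1 ∨ m = 2 ∨ m = 3 := by
  rcases m with ⟨v, hv⟩
  simp [Fin.ext_iff]
  omega

theorem fin2_cases (b : Fin 2) : b = 0 ∨ b = 1 := by
  rcases b with ⟨v, hv⟩
  simp [Fin.ext_iff]
  omega

/-- The matrix of the transposed differential in the canonical bases. -/
noncomputable def Tlin : (Fin 4 × Fin n × Fin n → k) →ₗ[k] (Fin 4 × Fin n × Fin n → k) where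
  toFun c := fun x =>
    c (x.1, x.2.1, x.2.2.rev) + e * c (dIx x.1, x.2.1.rev, x.2.2)
      + (if x.2.1 = finN n hn then
          ((if x.2.2 = fin1 n hn then c (tIx x.1, fin1 n hn, fin1 n hn) else 0)
            - (if x.2.2 = finN n hn then
                c (tIx x.1, fin1 n hn, finN n hn) + e * c (sIx x.1, finN n hn, fin1 n hn)
              else 0))
        else 0)
      + (if x.2.1 = fin1 n hn ∧ x.2.2 = finN n hn then
          e * c (sIx x.1, fin1 n hn, fin1 n hn) else 0)
  map_add' c d := by
    funext x
    simp only [Pi.add_apply]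
    split_ifs <;> ring
  map_smul' a c := by
    funext x
    simp only [Pi.smul_apply, smul_eq_mul, RingHom.id_apply]
    split_ifs <;> ring

theorem Tlin_apply (c : Fin 4 × Fin n × Fin n → k) (m : Fin 4) (j i : Fin n) :
    Tlin k n hn e c (m, j, i) =
      c (m, j, i.rev) + e * c (dIx m, j.rev, i)
        + (if j = finN n hn then
            ((if i = fin1 n hn then c (tIx m, fin1 n hn, fin1 n hn) else 0)
              - (if i = finN n hn then
                  c (tIx m, fin1 n hn, finN n hn) + e * c (sIx m, finN n hn, fin1 n hn)
                else 0))
          else 0)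
        + (if j = fin1 n hn ∧ i = finN n hn then
            e * c (sIx m, fin1 n hn, fin1 n hn) else 0) := rfl

/-- The parametrization of the kernel of `Tlin`. -/
noncomputable def Klin : ((Fin 2 × Fin n × Fin n) → k) →ₗ[k] (Fin 4 × Fin n × Fin n → k) where
  toFun f := fun x =>
    if x.1 = 0 then f (0, x.2.1, x.2.2)
    else if x.1 = 1 then f (1, x.2.1, x.2.2)
    else if x.1 = 2 then
      -(e * f (1, x.2.1.rev, x.2.2.rev))
        + (if x.2.1 = fin1 n hn ∧ x.2.2 = fin1 n hn then
            -(e * f (0, fin1 n hn, fin1 n hn)) else 0)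
        + (if x.2.1 = finN n hn ∧ x.2.2 = finN n hn then
            e * (f (0, finN n hn, finN n hn) + f (1, fin1 n hn, fin1 n hn)) else 0)
    else
      -(e * f (0, x.2.1.rev, x.2.2.rev))
        + (if x.2.1 = fin1 n hn ∧ x.2.2 = fin1 n hn then
            -(e * f (1, fin1 n hn, fin1 n hn)) else 0)
        + (if x.2.1 = finN n hn ∧ x.2.2 = finN n hn then
            e * (f (1, finN n hn, finN n hn) + f (0, fin1 n hn, fin1 n hn)) else 0)
  map_add' f g := by
    funext x
    simp only [Pi.add_apply]
    split_ifs <;> ring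
  map_smul' a f := by
    funext x
    simp only [Pi.smul_apply, smul_eq_mul, RingHom.id_apply]
    split_ifs <;> ring

theorem Klin_app0 (f : (Fin 2 × Fin n × Fin n) → k) (a b : Fin n) :
    Klin k n hn e f (0, a, b) = f (0, a, b) := rfl

theorem Klin_app1 (f : (Fin 2 × Fin n × Fin n) → k) (a b : Fin n) :
    Klin k n hn e f (1, a, b) = f (1, a, b) := rfl

theorem Klin_app2 (f : (Fin 2 × Fin n × Fin n) → k) (a b : Fin n) :
    Klin k n hn e f (2, a, b) =
      -(e * f (1, a.rev, b.rev))
        + (if a = fin1 n hn ∧ b = fin1 n hn then -(e * f (0, fin1 n hn, fin1 n hn)) else 0)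
        + (if a = finN n hn ∧ b = finN n hn then
            e * (f (0, finN n hn, finN n hn) + f (1, fin1 n hn, fin1 n hn)) else 0) := rfl

theorem Klin_app3 (f : (Fin 2 × Fin n × Fin n) → k) (a b : Fin n) :
    Klin k n hn e f (3, a, b) =
      -(e * f (0, a.rev, b.rev))
        + (if a = fin1 n hn ∧ b = fin1 n hn then -(e * f (1, fin1 n hn, fin1 n hn)) else 0)
        + (if a = finN n hn ∧ b = finN n hn then
            e * (f (1, finN n hn, finN n hn) + f (0, fin1 n hn, fin1 n hn)) else 0) := rfl

theorem Klin_injective : Function.Injective (Klin k n hn e) := by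
  intro f g h
  funext y
  obtain ⟨b, j, i⟩ := y
  rcases fin2_cases b with rfl | rfl
  · exact (Klin_app0 k n hn e f j i) ▸ (Klin_app0 k n hn e g j i) ▸ congrFun h (0, j, i)
  · exact (Klin_app1 k n hn e f j i) ▸ (Klin_app1 k n hn e g j i) ▸ congrFun h (1, j, i)

theorem fin_tri (j : Fin n) :
    j = fin1 n hn ∨ j = finN n hn ∨ (j ≠ fin1 n hn ∧ j ≠ finN n hn) := by
  tauto

theorem Tlin_Klin (he : e * e = 1) (f : (Fin 2 × Fin n × Fin n) → k) :
    Tlin k n hn e (Klin k n hn e f) = 0 := by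
  have h1N : fin1 n hn ≠ finN n hn := (finN_ne_fin1 hn).symm
  have hN1 : finN n hn ≠ fin1 n hn := finN_ne_fin1 hn
  rcases mul_self_eq_one_iff.mp he with rfl | rfl <;>
  · funext x
    obtain ⟨m, j, i⟩ := x
    rcases fin4_cases m with rfl | rfl | rfl | rfl <;>
      simp only [Pi.zero_apply, Tlin_apply, dIx_zero, dIx_one, dIx_two, dIx_three,
        tIx_zero, tIx_one, tIx_two, tIx_three, sIx_zero, sIx_one, sIx_two, sIx_three,
        Klin_app0, Klin_app1, Klin_app2, Klin_app3,
        Fin.rev_rev, rev_fin1 hn, rev_finN hn, rev_eq_fin1_iff hn, rev_eq_finN_iff hn] <;>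
      rcases fin_tri n hn j with rfl | rfl | ⟨hj1, hjN⟩ <;>
      rcases fin_tri n hn i with rfl | rfl | ⟨hi1, hiN⟩ <;>
      simp_all [h1N, hN1] <;>
      ring

set_option maxHeartbeats 1000000 in
theorem mem_range_Klin (he : e * e = 1) (c : Fin 4 × Fin n × Fin n → k)
    (hc : Tlin k n hn e c = 0) : ∃ f, Klin k n hn e f = c := by
  have h1N : fin1 n hn ≠ finN n hn := (finN_ne_fin1 hn).symm
  have hN1 : finN n hn ≠ fin1 n hn := finN_ne_fin1 hn
  let f : (Fin 2 × Fin n × Fin n) → k :=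
    fun y => if y.1 = 0 then c (0, y.2.1, y.2.2) else c (1, y.2.1, y.2.2)
  have hf0 : ∀ a b, f (0, a, b) = c (0, a, b) := fun _ _ => rfl
  have hf1 : ∀ a b, f (1, a, b) = c (1, a, b) := fun _ _ => rfl
  refine ⟨f, ?_⟩
  rcases mul_self_eq_one_iff.mp he with rfl | rfl <;>
  · funext x
    obtain ⟨m, j, i⟩ := x
    rcases fin4_cases m with rfl | rfl | rfl | rfl
    · exact (Klin_app0 k n hn _ f j i).trans (hf0 j i)
    · exact (Klin_app1 k n hn _ f j i).trans (hf1 j i)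
    · -- m = 2
      have hA1 := congrFun hc (1, j.rev, i)
      have hB0 := congrFun hc (0, fin1 n hn, fin1 n hn)
      have hC0 := congrFun hc (0, finN n hn, fin1 n hn)
      simp only [Pi.zero_apply, Tlin_apply, dIx_zero, dIx_one, tIx_zero, tIx_one,
        sIx_zero, sIx_one, Fin.rev_rev, rev_fin1 hn, rev_finN hn,
        rev_eq_fin1_iff hn, rev_eq_finN_iff hn] at hA1 hB0 hC0
      rw [Klin_app2]
      simp only [hf0, hf1, Fin.rev_rev]
      rcases fin_tri n hn j with rfl | rfl | ⟨hj1, hjN⟩ <;>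
        rcases fin_tri n hn i with rfl | rfl | ⟨hi1, hiN⟩ <;>
        (try simp only [eq_self_iff_true, true_and, and_true, if_true, h1N, hN1,
          if_false, and_false, false_and, rev_fin1 hn, rev_finN hn, *] at hA1) <;>
        (try simp only [eq_self_iff_true, true_and, and_true, if_true, h1N, hN1,
          if_false, and_false, false_and, rev_fin1 hn, rev_finN hn, *] at hB0) <;>
        (try simp only [eq_self_iff_true, true_and, and_true, if_true, h1N, hN1,
          if_false, and_false, false_and, rev_fin1 hn, rev_finN hn, *] at hC0) <;>
        (try simp only [hj1, hjN, if_false, and_false, false_and]) <;>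
        (try simp only [hi1, hiN, if_false, and_false, false_and]) <;>
        (try simp only [eq_self_iff_true, true_and, and_true, if_true, h1N, hN1,
          if_false, and_false, false_and, rev_fin1 hn, rev_finN hn]) <;>
        first
          | ring1
          | linear_combination -hA1
          | linear_combination hA1
          | linear_combination -hA1 - hB0
          | linear_combination hA1 + hB0
          | linear_combination -hA1 + hC0
          | linear_combination hA1 - hC0
          | linear_combination -hA1 - hC0
          | linear_combination hA1 + hC0
    · -- m = 3
      have hA0 := congrFun hc (0, j.rev, i)
      have hB1 := congrFun hc (1, fin1 n hn, fin1 n hn)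
      have hC1 := congrFun hc (1, finN n hn, fin1 n hn)
      simp only [Pi.zero_apply, Tlin_apply, dIx_zero, dIx_one, tIx_zero, tIx_one,
        sIx_zero, sIx_one, Fin.rev_rev, rev_fin1 hn, rev_finN hn,
        rev_eq_fin1_iff hn, rev_eq_finN_iff hn] at hA0 hB1 hC1
      rw [Klin_app3]
      simp only [hf0, hf1, Fin.rev_rev]
      rcases fin_tri n hn j with rfl | rfl | ⟨hj1, hjN⟩ <;>
        rcases fin_tri n hn i with rfl | rfl | ⟨hi1, hiN⟩ <;>
        (try simp only [eq_self_iff_true, true_and, and_true, if_true, h1N, hN1,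
          if_false, and_false, false_and, rev_fin1 hn, rev_finN hn, *] at hA0) <;>
        (try simp only [eq_self_iff_true, true_and, and_true, if_true, h1N, hN1,
          if_false, and_false, false_and, rev_fin1 hn, rev_finN hn, *] at hB1) <;>
        (try simp only [eq_self_iff_true, true_and, and_true, if_true, h1N, hN1,
          if_false, and_false, false_and, rev_fin1 hn, rev_finN hn, *] at hC1) <;>
        (try simp only [hj1, hjN, if_false, and_false, false_and]) <;>
        (try simp only [hi1, hiN, if_false, and_false, false_and]) <;>
        (try simp only [eq_self_iff_true, true_and, and_true, if_true, h1N, hN1,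
          if_false, and_false, false_and, rev_fin1 hn, rev_finN hn]) <;>
        first
          | ring1
          | linear_combination -hA0
          | linear_combination hA0
          | linear_combination -hA0 - hB1
          | linear_combination hA0 + hB1
          | linear_combination -hA0 + hC1
          | linear_combination hA0 - hC1
          | linear_combination -hA0 - hC1
          | linear_combination hA0 + hC1

theorem ker_Tlin (he : e * e = 1) :
    LinearMap.ker (Tlin k n hn e) = LinearMap.range (Klin k n hn e) := by
  ext c
  constructor
  · intro hc
    obtain ⟨f, hf⟩ := mem_range_Klin k n hn e he c (LinearMap.mem_ker.mp hc)
    exact ⟨f, hf⟩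
  · rintro ⟨f, rfl⟩
    exact LinearMap.mem_ker.mpr (Tlin_Klin k n hn e he f)

theorem finrank_ker_Tlin (he : e * e = 1) :
    Module.finrank k ↥(LinearMap.ker (Tlin k n hn e)) = 2 * n ^ 2 := by
  rw [ker_Tlin k n hn e he, LinearMap.finrank_range_of_inj (Klin_injective k n hn e),
    Module.finrank_fintype_fun_eq_card]
  simp [Fintype.card_prod]
  ring

theorem finrank_range_Tlin (he : e * e = 1) :
    Module.finrank k ↥(LinearMap.range (Tlin k n hn e)) = 2 * n ^ 2 := by
  have h := LinearMap.finrank_range_add_finrank_ker (Tlin k n hn e)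
  rw [finrank_ker_Tlin k n hn e he, Module.finrank_fintype_fun_eq_card] at h
  have hcard : Fintype.card (Fin 4 × Fin n × Fin n) = 4 * n ^ 2 := by
    simp [Fintype.card_prod]; ring
  omega

end TlinKlin


section Bridge

variable (k : Type*) [Field k] (n : ℕ) (hn : 2 ≤ n) (ε : Aq k n →ₐ[k] k)

theorem pw_mem {v : Mat n} (hv : v ∈ V n) (l : ℕ) : pw l v ∈ V n := by
  unfold pw
  split
  · exact hv
  · exact V_mD hv

theorem eps_neg_one_pow (l : ℕ) : ε ((-1 : Aq k n) ^ l) = (-1 : k) ^ l := by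
  rw [map_pow, map_neg, map_one]

set_option maxHeartbeats 1000000 in
theorem bridge
    (hε : ∀ v ∈ V n, ∀ j i : Fin n, ε (gen k v j i) = if j = i then 1 else 0)
    (l : ℕ) (hl : 4 ≤ l)
    (dl : Pmod k n hn l →ₗ[(Aq k n)ᵐᵒᵖ] Pmod k n hn (l - 1))
    (hdl : ∀ (v : Mat n) (hv : v ∈ V n) (j i : Fin n),
      dl (bas k n hn l v hv j i 1) = dTail k n hn l v hv j i)
    (g : Pmod k n hn (l - 1) →ₗ[(Aq k n)ᵐᵒᵖ] KE k n ε) :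
    Phi k n hn ε l (homMap k ε dl g) =
      Tlin k n hn ((-1 : k) ^ l) (Phi k n hn ε (l - 1) g) := by
  funext x
  obtain ⟨m, j, i⟩ := x
  have hl3 : l ≠ 3 := by omega
  have h1 : Phi k n hn ε l (homMap k ε dl g) (m, j, i)
      = g (dl (bas k n hn l (vOf n m) (hvOf m) j i 1)) := rfl
  rw [h1, hdl]
  -- abbreviations
  have Hb : ∀ (a b : Fin n) (coeff : Aq k n),
      g (bas k n hn (l - 1) (vOf n m) (hvOf m) a b coeff) =
        ε coeff • Phi k n hn ε (l - 1) g (m, a, b) :=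
    fun a b coeff => Phi_apply_bas k n hn ε (l - 1) g _ _ m rfl a b coeff
  have HbD : ∀ (a b : Fin n) (coeff : Aq k n),
      g (bas k n hn (l - 1) (mD (vOf n m)) (V_mD (hvOf m)) a b coeff) =
        ε coeff • Phi k n hn ε (l - 1) g (dIx m, a, b) :=
    fun a b coeff => Phi_apply_bas k n hn ε (l - 1) g _ _ (dIx m) (mD_vOf m) a b coeff
  have HbT : ∀ (a b : Fin n) (coeff : Aq k n),
      g (bas k n hn (l - 1) (mT (vOf n m)) (V_mT (hvOf m)) a b coeff) =
        ε coeff • Phi k n hn ε (l - 1) g (tIx m, a, b) :=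
    fun a b coeff => Phi_apply_bas k n hn ε (l - 1) g _ _ (tIx m) (mT_vOf m) a b coeff
  have HbS : ∀ (a b : Fin n) (coeff : Aq k n),
      g (bas k n hn (l - 1) (mS (vOf n m)) (V_mS (hvOf m)) a b coeff) =
        ε coeff • Phi k n hn ε (l - 1) g (sIx m, a, b) :=
    fun a b coeff => Phi_apply_bas k n hn ε (l - 1) g _ _ (sIx m) (mS_vOf m) a b coeff
  have Hg1 : ∀ s b : Fin n, ε (gen k (pw l (vOf n m)) s b) = if s = b then 1 else 0 :=
    fun s b => hε _ (pw_mem n (hvOf m) l) s b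
  have Hg2 : ∀ s b : Fin n, ε (gen k (pw l (mT (vOf n m))) s b) = if s = b then 1 else 0 :=
    fun s b => hε _ (pw_mem n (V_mT (hvOf m)) l) s b
  have Hsub : ∀ a b : Pmod k n hn (l - 1), g (a - b) = g a - g b :=
    fun a b => map_sub g a b
  have h1N : fin1 n hn ≠ finN n hn := (finN_ne_fin1 hn).symm
  have hN1 : finN n hn ≠ fin1 n hn := finN_ne_fin1 hn
  have hsum : ∀ (a : Fin n) (c : k),
      @Finset.sum (Fin n) (KE k n ε) _ Finset.univ (fun x => (if x = a then c else (0 : k) : k)) = c :=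
    fun a c => (Finset.sum_eq_single a (fun b _ hb => if_neg hb)
      (fun h => absurd (Finset.mem_univ a) h)).trans (if_pos rfl)
  have hsum2 : ∀ (a : Fin n) (f : Fin n → k),
      @Finset.sum (Fin n) (KE k n ε) _ Finset.univ (fun x => (if x = a then f x else (0 : k) : k)) = f a :=
    fun a f => (Finset.sum_eq_single a (fun b _ hb => if_neg hb)
      (fun h => absurd (Finset.mem_univ a) h)).trans (if_pos rfl)
  rw [dTail]
  simp only [hl3, if_false, add_zero, map_add, Hsub, map_sum,
    apply_ite (⇑g), map_zero, Hb, HbD, HbT, HbS, Hg1, Hg2,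
    eps_neg_one_pow k n ε, ite_smul, one_smul, zero_smul, smul_eq_mul,
    ite_mul, mul_ite, one_mul, zero_mul, mul_one, mul_zero,
    Finset.sum_ite_eq', Finset.sum_ite_eq, hsum, hsum2, Finset.mem_univ, if_true,
    rev_eq_finN_iff hn, rev_eq_fin1_iff hn, Tlin_apply]
  have hKadd : ∀ x y : k, @HAdd.hAdd (KE k n ε) (KE k n ε) (KE k n ε) instHAdd x y = x + y :=
    fun _ _ => rfl
  have hKsub : ∀ x y : k, @HSub.hSub (KE k n ε) (KE k n ε) (KE k n ε) instHSub x y = x - y :=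
    fun _ _ => rfl
  have hKneg : ∀ x : k, @Neg.neg (KE k n ε) _ x = -x := fun _ => rfl
  have hK0 : (0 : KE k n ε) = (0 : k) := rfl
  all_goals split_ifs <;> first | ring1 | (simp_all [h1N, hN1]; done) | exact congrArg (fun t : k => (_ : k) + t) (if_neg (show ¬(j = fin1 n hn ∧ i = finN n hn) by tauto)) | (simp only [hKadd, hKsub, hKneg, hK0]; first | ring1 | (simp_all [h1N, hN1]; done))

end Bridge

theorem statement_18 (k : Type*) [Field k] (n : ℕ) (hn : 2 ≤ n)
    (ε : Aq k n →ₐ[k] k)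
    (hε : ∀ v ∈ V n, ∀ j i : Fin n, ε (gen k v j i) = if j = i then 1 else 0)
    (l : ℕ) (hl : 4 ≤ l)
    (dl : Pmod k n hn l →ₗ[(Aq k n)ᵐᵒᵖ] Pmod k n hn (l - 1))
    (hdl : ∀ (v : Mat n) (hv : v ∈ V n) (j i : Fin n),
      dl (bas k n hn l v hv j i 1) = dTail k n hn l v hv j i) :
    Module.rank k (LinearMap.ker (homMap k ε dl)) = ((2 * n ^ 2 : ℕ) : Cardinal) ∧
      Module.rank k (LinearMap.range (homMap k ε dl)) = ((2 * n ^ 2 : ℕ) : Cardinal) := by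
  have hl1 : 3 ≤ l - 1 := by omega
  have hl2 : 3 ≤ l := by omega
  have he : ((-1 : k) ^ l) * ((-1 : k) ^ l) = 1 := by
    rw [← pow_add]
    exact Even.neg_one_pow ⟨l, rfl⟩
  let Φ1 := PhiEquiv k n hn ε (l - 1) hl1
  let Φ2 := PhiEquiv k n hn ε l hl2
  have hbridge : ∀ g, Φ2 (homMap k ε dl g) = Tlin k n hn ((-1 : k) ^ l) (Φ1 g) := fun g =>
    bridge k n hn ε hε l hl dl hdl g
  constructor
  · have hker : LinearMap.ker (homMap k ε dl) =
        Submodule.comap (Φ1 : _ →ₗ[k] _)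
          (LinearMap.ker (Tlin k n hn ((-1 : k) ^ l))) := by
      ext g
      simp only [LinearMap.mem_ker, Submodule.mem_comap, LinearEquiv.coe_coe]
      constructor
      · intro h
        rw [← hbridge g, h, map_zero]
      · intro h
        have h2 : Φ2 (homMap k ε dl g) = 0 := by
          rw [hbridge g, h]
        exact (LinearEquiv.map_eq_zero_iff Φ2).mp h2
    rw [hker,
      LinearEquiv.rank_eq
        (LinearEquiv.ofSubmodule' Φ1 (LinearMap.ker (Tlin k n hn ((-1 : k) ^ l)))),
      ← Module.finrank_eq_rank, finrank_ker_Tlin k n hn _ he]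
  · have hrange : LinearMap.range (homMap k ε dl) =
        Submodule.comap (Φ2 : _ →ₗ[k] _)
          (LinearMap.range (Tlin k n hn ((-1 : k) ^ l))) := by
      ext h
      simp only [LinearMap.mem_range, Submodule.mem_comap, LinearEquiv.coe_coe]
      constructor
      · rintro ⟨g, rfl⟩
        exact ⟨Φ1 g, (hbridge g).symm⟩
      · rintro ⟨cc, hcc⟩
        obtain ⟨g, rfl⟩ := Φ1.surjective cc
        exact ⟨g, Φ2.injective (by rw [hbridge g, hcc])⟩
    rw [hrange,
      LinearEquiv.rank_eq
        (LinearEquiv.ofSubmodule' Φ2 (LinearMap.range (Tlin k n hn ((-1 : k) ^ l)))),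
      ← Module.finrank_eq_rank, finrank_range_Tlin k n hn _ he]

end UnPlusAnick
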